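/- arXiv:2201.08963 — 4 statements merged into one kernel-verified Lean document; each statement's English description precedes it below -/
import Mathlib

section
/- In the category Cau of causal-nets, a morphism is a monomorphism if and only if it is an inclusion. -/
open CategoryTheory

namespace CausalNets

/-- Acyclicity condition for raw directed-multigraph data: every directed cycle
has length zero. -/
def NoCycleData (V E : Type) (s t : E → V) : Prop :=
  letI : Quiver V := ⟨fun a b => { e : E // s e = a ∧ t e = b }⟩
  ∀ (v : V) (p : Quiver.Path v v), p.length = 0

/-- A causal-net: a finite acyclic directed multigraph (isolated vertices and
parallel edges allowed). -/
structure CausalNet where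
  V : Type
  E : Type
  src : E → V
  tgt : E → V
  fintypeV : Fintype V
  fintypeE : Fintype E
  acyclic : NoCycleData V E src tgt

attribute [instance] CausalNet.fintypeV CausalNet.fintypeE

instance CausalNet.quiver (G : CausalNet) : Quiver G.V :=
  ⟨fun a b => { e : G.E // G.src e = a ∧ G.tgt e = b }⟩

/-- The category `Cau` of causal-nets: a morphism `G ⟶ H` is a functor between
the path categories `Paths G.V ⥤ Paths H.V`. -/
instance : Category CausalNet where
  Hom G H := Paths G.V ⥤ Paths H.V
  id G := 𝟭 (Paths G.V)
  comp φ ψ := φ ⋙ ψ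

variable {G H K : CausalNet}

/-- The action of a morphism of causal-nets on vertices (objects). -/
def vmap (φ : G ⟶ H) : G.V → H.V := (φ : Paths G.V ⥤ Paths H.V).obj

/-- The action of a morphism of causal-nets on directed paths (morphisms). -/
def pmap (φ : G ⟶ H) {a b : G.V} (p : Quiver.Path a b) :
    Quiver.Path (vmap φ a) (vmap φ b) :=
  (φ : Paths G.V ⥤ Paths H.V).map p

/-- The quiver arrow corresponding to an edge. -/
def edgeHom (G : CausalNet) (e : G.E) : G.src e ⟶ G.tgt e := ⟨e, rfl, rfl⟩

/-- The directed path which is the image of the edge `e` under the morphism `φ`. -/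
def edgePath (φ : G ⟶ H) (e : G.E) :
    Quiver.Path (vmap φ (G.src e)) (vmap φ (G.tgt e)) :=
  pmap φ (Quiver.Hom.toPath (edgeHom G e))

/-- The underlying edge of a quiver arrow. -/
def homEdge {a b : G.V} (f : a ⟶ b) : G.E := Subtype.val f

/-- The list of edges traversed by a directed path. -/
def pathEdges : {a b : G.V} → Quiver.Path a b → List G.E
  | _, _, Quiver.Path.nil => []
  | _, _, Quiver.Path.cons p f => pathEdges p ++ [homEdge f]

/-- The list of vertices visited by a directed path (including endpoints). -/
def pathVertices : {a b : G.V} → Quiver.Path a b → List G.V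
  | a, _, Quiver.Path.nil => [a]
  | _, b, Quiver.Path.cons p _ => pathVertices p ++ [b]

/-- An edge `e` is a contraction of `φ` if `φ(e)` has length `0`. -/
def IsContractionEdge (φ : G ⟶ H) (e : G.E) : Prop := (edgePath φ e).length = 0

/-- An edge `e` is a segment of `φ` if `φ(e)` has length `1`. -/
def IsSegmentEdge (φ : G ⟶ H) (e : G.E) : Prop := (edgePath φ e).length = 1

/-- An edge `e` is a subdivision of `φ` if `φ(e)` has length at least `2`. -/
def IsSubdivisionEdge (φ : G ⟶ H) (e : G.E) : Prop := 2 ≤ (edgePath φ e).length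

/-- `φ` maps the edge `e` to the length-one path consisting of the edge `h`. -/
def MapsToEdge (φ : G ⟶ H) (e : G.E) (h : H.E) : Prop :=
  pathEdges (edgePath φ e) = [h]

/-- A quotient: a morphism with no null-vertex and no null-edge. -/
def IsQuotientMor (φ : G ⟶ H) : Prop :=
  (∀ v : H.V, ∃ w : G.V, vmap φ w = v) ∧ ∀ h : H.E, ∃ e : G.E, MapsToEdge φ e h

/-- A coarse-graining: a quotient with no subdivision. -/
def IsCoarseGraining (φ : G ⟶ H) : Prop :=
  IsQuotientMor φ ∧ ∀ e : G.E, ¬ IsSubdivisionEdge φ e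

/-- A vertex-coarse-graining: a coarse-graining with no multiple-edge. -/
def IsVertexCoarseGraining (φ : G ⟶ H) : Prop :=
  IsCoarseGraining φ ∧
  ∀ (h : H.E) (e₁ e₂ : G.E), MapsToEdge φ e₁ h → MapsToEdge φ e₂ h → e₁ = e₂

/-- An edge-coarse-graining: a coarse-graining with no multiple-vertex and no
contraction. -/
def IsEdgeCoarseGraining (φ : G ⟶ H) : Prop :=
  IsCoarseGraining φ ∧ Function.Injective (vmap φ) ∧ ∀ e : G.E, ¬ IsContractionEdge φ e

/-- A merging: a vertex-coarse-graining with no contraction. -/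
def IsMerging (φ : G ⟶ H) : Prop :=
  IsVertexCoarseGraining φ ∧ ∀ e : G.E, ¬ IsContractionEdge φ e

/-- A fusion: a coarse-graining with no contraction. -/
def IsFusion (φ : G ⟶ H) : Prop :=
  IsCoarseGraining φ ∧ ∀ e : G.E, ¬ IsContractionEdge φ e

/-- An inclusion: a morphism injective on vertices and on directed paths
(an injective-on-objects faithful functor). -/
def IsInclusion (φ : G ⟶ H) : Prop :=
  Function.Injective (vmap φ) ∧
  ∀ (a b : G.V) (p q : Quiver.Path a b), pmap φ p = pmap φ q → p = q

/-- An embedding: an inclusion with no subdivision. -/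
def IsEmbedding (φ : G ⟶ H) : Prop :=
  IsInclusion φ ∧ ∀ e : G.E, ¬ IsSubdivisionEdge φ e

/-- An immersion: an inclusion such that images of distinct subdivision edges
share no edge. -/
def IsImmersion (φ : G ⟶ H) : Prop :=
  IsInclusion φ ∧
  ∀ e₁ e₂ : G.E, e₁ ≠ e₂ → IsSubdivisionEdge φ e₁ → IsSubdivisionEdge φ e₂ →
    ∀ h : H.E, h ∈ pathEdges (edgePath φ e₁) → h ∉ pathEdges (edgePath φ e₂)

/-- The internal vertices of a directed path (all visited vertices except the
two endpoints). -/
def internalVertices {a b : G.V} (p : Quiver.Path a b) : List G.V :=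
  ((pathVertices p).dropLast).tail

/-- A strong morphism: all internal vertices of images of subdivision edges are
null-vertices. -/
def IsStrong (φ : G ⟶ H) : Prop :=
  ∀ e : G.E, IsSubdivisionEdge φ e →
    ∀ v ∈ internalVertices (edgePath φ e), ∀ w : G.V, vmap φ w ≠ v

/-- A vertex-disjoint morphism: images of distinct subdivision edges share no
internal vertex. -/
def IsVertexDisjoint (φ : G ⟶ H) : Prop :=
  ∀ e₁ e₂ : G.E, e₁ ≠ e₂ → IsSubdivisionEdge φ e₁ → IsSubdivisionEdge φ e₂ →
    ∀ v : H.V, v ∈ internalVertices (edgePath φ e₁) → v ∉ internalVertices (edgePath φ e₂)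

/-- A topological embedding: a strong vertex-disjoint inclusion. -/
def IsTopologicalEmbedding (φ : G ⟶ H) : Prop :=
  IsInclusion φ ∧ IsStrong φ ∧ IsVertexDisjoint φ

/-- The edge `e` covers the vertex `v` if `v` occurs on the path `φ(e)`. -/
def Covers (φ : G ⟶ H) (e : G.E) (v : H.V) : Prop :=
  v ∈ pathVertices (edgePath φ e)

/-- An isolated vertex: a vertex incident to no edge. -/
def IsolatedVertex (G : CausalNet) (v : G.V) : Prop :=
  ∀ e : G.E, G.src e ≠ v ∧ G.tgt e ≠ v

/-- A subdivision morphism: a topological embedding such that every non-isolated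
vertex of the codomain is covered and every isolated vertex of the codomain is a
simple-vertex. -/
def IsSubdivisionMor (φ : G ⟶ H) : Prop :=
  IsTopologicalEmbedding φ ∧
  (∀ v : H.V, ¬ IsolatedVertex H v → ∃ e : G.E, Covers φ e v) ∧
  (∀ v : H.V, IsolatedVertex H v → ∃! w : G.V, vmap φ w = v)

theorem mapPath_length {V W : Type} [Quiver V] [Quiver W] (F : V ⥤q W) :
    ∀ {a b : V} (p : Quiver.Path a b), (F.mapPath p).length = p.length := by
  intro a b p
  induction p with
  | nil => rfl
  | cons q f ih =>
      show ((F.mapPath q).cons (F.map f)).length = (q.cons f).length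
      rw [Quiver.Path.length_cons, Quiver.Path.length_cons, ih]

theorem noCycleData_of_map {V₁ E₁ : Type} (s₁ t₁ : E₁ → V₁) (G : CausalNet)
    (f : V₁ → G.V) (g : E₁ → G.E)
    (hs : ∀ e, G.src (g e) = f (s₁ e)) (ht : ∀ e, G.tgt (g e) = f (t₁ e)) :
    NoCycleData V₁ E₁ s₁ t₁ := by
  letI : Quiver V₁ := ⟨fun a b => { e : E₁ // s₁ e = a ∧ t₁ e = b }⟩
  intro v p
  let F : V₁ ⥤q G.V :=
    { obj := f
      map := fun {a b} e =>
        ⟨g (Subtype.val e), by rw [hs, (Subtype.prop e).1], by rw [ht, (Subtype.prop e).2]⟩ }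
  have h := G.acyclic (f v) (F.mapPath p)
  rw [mapPath_length] at h
  exact h

theorem noCycleData_of_lt {V E : Type} [Preorder V] (s t : E → V)
    (hlt : ∀ e, s e < t e) : NoCycleData V E s t := by
  letI : Quiver V := ⟨fun a b => { e : E // s e = a ∧ t e = b }⟩
  have key : ∀ {a b : V} (p : Quiver.Path a b), (a = b ∧ p.length = 0) ∨ a < b := by
    intro a b p
    induction p with
    | nil => exact Or.inl ⟨rfl, rfl⟩
    | cons q f ih =>
        have hcb := hlt (Subtype.val f)
        rw [(Subtype.prop f).1, (Subtype.prop f).2] at hcb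
        rcases ih with ⟨h, _⟩ | h
        · exact Or.inr (by rw [h]; exact hcb)
        · exact Or.inr (lt_trans h hcb)
  intro v p
  rcases key p with ⟨_, h⟩ | h
  · exact h
  · exact absurd h (lt_irrefl v)

/-- The sub-causal-net spanned by a set of vertices and a set of edges. -/
noncomputable def mkSub (G : CausalNet) (Vs : Set G.V) (Es : Set G.E)
    (hs : ∀ e ∈ Es, G.src e ∈ Vs) (ht : ∀ e ∈ Es, G.tgt e ∈ Vs) : CausalNet where
  V := Vs
  E := Es
  src e := ⟨G.src e.1, hs e.1 e.2⟩
  tgt e := ⟨G.tgt e.1, ht e.1 e.2⟩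
  fintypeV := Fintype.ofFinite _
  fintypeE := Fintype.ofFinite _
  acyclic := noCycleData_of_map _ _ G Subtype.val Subtype.val (fun _ => rfl) (fun _ => rfl)

/-- The fiber of a morphism at a vertex `v` of the codomain: the sub-causal-net
of the domain on the vertices mapped to `v` and the edges mapped to the identity
path at `v`. -/
noncomputable def fiber (φ : G ⟶ H) (v : H.V) : CausalNet :=
  mkSub G {w : G.V | vmap φ w = v}
    {e : G.E | IsContractionEdge φ e ∧ vmap φ (G.src e) = v}
    (fun _ he => he.2)
    (fun e he =>
      show vmap φ (G.tgt e) = v from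
        Quiver.Path.eq_of_length_zero (edgePath φ e) he.1 ▸ he.2)

/-- The underlying undirected (simple) graph of a causal-net. -/
def undirected (G : CausalNet) : SimpleGraph G.V where
  Adj v w := v ≠ w ∧ ∃ e : G.E, (G.src e = v ∧ G.tgt e = w) ∨ (G.src e = w ∧ G.tgt e = v)
  symm := by
    constructor
    rintro v w ⟨hne, e, he⟩
    exact ⟨hne.symm, e, he.symm⟩
  loopless := by
    constructor
    intro v h
    exact h.1 rfl

/-- A causal-net is connected if its underlying undirected graph is connected. -/
def Connected (G : CausalNet) : Prop := (undirected G).Connected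

/-- A causal-Tree: a causal-net whose simplification has a tree as underlying
undirected graph.  (Since a causal-net is acyclic, the underlying undirected
graph of its simplification is exactly `undirected G`.) -/
def IsCausalTree (G : CausalNet) : Prop := (undirected G).IsTree

/-- A contraction: a vertex-coarse-graining all of whose fibers are connected. -/
def IsContractionMor (φ : G ⟶ H) : Prop :=
  IsVertexCoarseGraining φ ∧ ∀ v : H.V, Connected (fiber φ v)

/-- A simple contraction: a contraction with exactly one non-trivial fiber, that
fiber consisting of two vertices together with all edges from the first to the
second. -/
def IsSimpleContraction (φ : G ⟶ H) : Prop :=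
  IsContractionMor φ ∧
  ∃ w₁ w₂ : G.V, w₁ ≠ w₂ ∧ vmap φ w₁ = vmap φ w₂ ∧
    (∃ e : G.E, G.src e = w₁ ∧ G.tgt e = w₂) ∧
    (∀ e : G.E, IsContractionEdge φ e ↔ (G.src e = w₁ ∧ G.tgt e = w₂)) ∧
    (∀ u u' : G.V, vmap φ u = vmap φ u' →
      u = u' ∨ ((u = w₁ ∨ u = w₂) ∧ (u' = w₁ ∨ u' = w₂)))

/-- A tree-contraction: a contraction all of whose fibers are causal-Trees. -/
def IsTreeContraction (φ : G ⟶ H) : Prop :=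
  IsContractionMor φ ∧ ∀ v : H.V, IsCausalTree (fiber φ v)

/-- A directed multi-path: a causal-net whose simplification is a directed path. -/
def IsDirectedMultiPath (K : CausalNet) : Prop :=
  ∃ (a b : K.V) (p : Quiver.Path a b),
    (pathVertices p).Nodup ∧ (∀ v : K.V, v ∈ pathVertices p) ∧
    ∀ e : K.E, ∃ h ∈ pathEdges p, K.src e = K.src h ∧ K.tgt e = K.tgt h

/-- A path-contraction: a vertex-coarse-graining all of whose fibers are
directed multi-paths. -/
def IsPathContraction (φ : G ⟶ H) : Prop :=
  IsVertexCoarseGraining φ ∧ ∀ v : H.V, IsDirectedMultiPath (fiber φ v)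

/-- A point: a causal-net with exactly one vertex and no edges. -/
def IsPoint (A : CausalNet) : Prop := (∃ v : A.V, ∀ w : A.V, w = v) ∧ IsEmpty A.E

/-- Reachability: there is a directed path from `a` to `b`. -/
def Reaches (G : CausalNet) (a b : G.V) : Prop := Nonempty (Quiver.Path a b)

/-- A coclique: a set of vertices no two distinct members of which are
comparable under the reachability order. -/
def IsCoclique (G : CausalNet) (S : Set G.V) : Prop :=
  ∀ a ∈ S, ∀ b ∈ S, a ≠ b → ¬ Reaches G a b

/-- A multi-edge: the nonempty set of all edges from one fixed vertex to another. -/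
def IsMultiEdge (G : CausalNet) (s : Set G.E) : Prop :=
  s.Nonempty ∧ ∃ a b : G.V, s = {e : G.E | G.src e = a ∧ G.tgt e = b}

/-- The pair of vertices whose multi-edge is contracted by a simple contraction. -/
def ContractedPair (φ : G ⟶ H) (w₁ w₂ : G.V) : Prop :=
  w₁ ≠ w₂ ∧ vmap φ w₁ = vmap φ w₂ ∧ (∃ e : G.E, G.src e = w₁ ∧ G.tgt e = w₂) ∧
  ∀ e : G.E, IsContractionEdge φ e ↔ (G.src e = w₁ ∧ G.tgt e = w₂)

/-- Two causal-nets are isomorphic in `Cau`. -/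
def IsIsomorphicTo (A B : CausalNet) : Prop := ∃ φ : A ⟶ B, IsIso φ

/-- A simple causal-net: at most one edge between any ordered pair of vertices. -/
def IsSimpleNet (G : CausalNet) : Prop :=
  ∀ e₁ e₂ : G.E, G.src e₁ = G.src e₂ → G.tgt e₁ = G.tgt e₂ → e₁ = e₂

/-- A harmonic causal-net: every fusion out of it is an isomorphism. -/
def Harmonic (G : CausalNet) : Prop :=
  ∀ (H : CausalNet) (φ : G ⟶ H), IsFusion φ → IsIso φ

/-- A hamiltonian path: a directed path visiting every vertex exactly once. -/
def HasHamiltonianPath (G : CausalNet) : Prop :=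
  ∃ (a b : G.V) (p : Quiver.Path a b),
    (pathVertices p).Nodup ∧ ∀ v : G.V, v ∈ pathVertices p

/-- Morphisms which can be written as a composition of finitely many morphisms
each satisfying `P`. -/
inductive IsCompOf (P : ∀ ⦃A B : CausalNet⦄, (A ⟶ B) → Prop) :
    ∀ {A B : CausalNet}, (A ⟶ B) → Prop
  | of {A B : CausalNet} (φ : A ⟶ B) : P φ → IsCompOf P φ
  | comp {A B C : CausalNet} (φ : A ⟶ B) (ψ : B ⟶ C) :
      IsCompOf P φ → IsCompOf P ψ → IsCompOf P (φ ≫ ψ)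

/-- The one-point causal-net. -/
def pointNet : CausalNet where
  V := Unit
  E := Empty
  src := Empty.elim
  tgt := Empty.elim
  fintypeV := inferInstance
  fintypeE := inferInstance
  acyclic := by
    intro v p
    cases p with
    | nil => rfl
    | cons q f => exact (Subtype.val f).elim

/-- The morphism from the point picking out a vertex. -/
def pointMor (G : CausalNet) (a : G.V) : pointNet ⟶ G :=
  Paths.lift { obj := fun _ => a, map := fun f => (Subtype.val f).elim }

/-- The single-edge causal-net. -/
def lineNet : CausalNet where
  V := Bool
  E := Unit
  src _ := false
  tgt _ := true
  fintypeV := inferInstance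
  fintypeE := inferInstance
  acyclic := noCycleData_of_lt _ _ (fun _ => by decide)

/-- The morphism from the line sending the edge to a given path. -/
def lineMor (G : CausalNet) {a b : G.V} (p : Quiver.Path a b) : lineNet ⟶ G :=
  Paths.lift
    { obj := fun x => bif x then b else a
      map := fun {x y} f => by
        obtain ⟨e, hs, ht⟩ := f
        subst hs; subst ht
        exact p }

/-- The edge of the line net as a quiver arrow. -/
def lineEdge : @Quiver.Hom lineNet.V (CausalNet.quiver lineNet) false true :=
  ⟨(), rfl, rfl⟩

theorem lineMor_map (G : CausalNet) {a b : G.V} (p : Quiver.Path a b)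
    (f : @Quiver.Hom lineNet.V (CausalNet.quiver lineNet) false true) :
    ((lineMor G p).map (Quiver.Hom.toPath f) : Quiver.Path a b) = p := by
  obtain ⟨e, hs, ht⟩ := f
  exact (Paths.lift_toPath _ _).trans rfl

theorem mono_iff_inclusion {G H : CausalNet} (φ : G ⟶ H) :
    Mono φ ↔ IsInclusion φ := by
  constructor
  · intro hm
    constructor
    · -- injectivity on vertices
      intro a b hab
      have h : pointMor G a ≫ φ = pointMor G b ≫ φ := by
        have hobj : (pointMor G a ≫ φ).obj = (pointMor G b ≫ φ).obj := by
          funext x; exact hab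
        apply Paths.ext_functor hobj
        intro x y e; exact (Subtype.val e).elim
      have h' := (cancel_mono φ).mp h
      exact Functor.congr_obj h' ()
    · -- injectivity on paths
      intro a b p q hpq
      have h : lineMor G p ≫ φ = lineMor G q ≫ φ := by
        have hobj : (lineMor G p ≫ φ).obj = (lineMor G q ≫ φ).obj := by
          funext x; cases x <;> rfl
        apply Paths.ext_functor hobj
        rintro x y ⟨e, hs, ht⟩
        subst hs; subst ht
        show (φ : Paths G.V ⥤ Paths H.V).map ((lineMor G p).map _) = _
        erw [lineMor_map G p]
        show _ = eqToHom _ ≫ (φ : Paths G.V ⥤ Paths H.V).map ((lineMor G q).map _) ≫ eqToHom _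
        erw [lineMor_map G q]
        erw [eqToHom_refl, eqToHom_refl, Category.id_comp, Category.comp_id]
        exact hpq
      have h' := (cancel_mono φ).mp h
      have := Functor.congr_hom h'
        (Quiver.Hom.toPath lineEdge)
      erw [eqToHom_refl, eqToHom_refl, Category.id_comp, Category.comp_id] at this
      rw [lineMor_map G p, lineMor_map G q] at this
      exact this
  · rintro ⟨hv, hp⟩
    constructor
    intro K ψ₁ ψ₂ h
    have hobj : (ψ₁ : Paths K.V ⥤ Paths G.V).obj = ψ₂.obj := by
      funext x
      exact hv (Functor.congr_obj h x)
    apply Paths.ext_functor hobj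
    intro x y e
    apply hp
    show (φ : Paths G.V ⥤ Paths H.V).map _ = (φ : Paths G.V ⥤ Paths H.V).map _
    rw [Functor.map_comp, Functor.map_comp, eqToHom_map, eqToHom_map]
    exact Functor.congr_hom h (Quiver.Hom.toPath e)

end CausalNets
end

section
/- For causal-nets G and H, H is a quotient-causal-net of G if and only if there exists a coarse-graining λ : G → H. -/
open CategoryTheory

namespace CausalNets

variable {G H K : CausalNet}

def InducedEdgeSet (G : CausalNet) (Es : Set G.E) : Prop :=
  ∀ e ∈ Es, ∀ e' : G.E, G.src e' = G.src e → G.tgt e' = G.tgt e → e' ∈ Es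

def IsQuotientCausalNetOf (H G : CausalNet) : Prop :=
  ∃ (rv : Setoid G.V) (Es : Set G.E) (re : Setoid {e : G.E // e ∈ Es}),
    InducedEdgeSet G Es ∧
    (∀ e : G.E,
      (e ∈ Es → ¬ rv.r (G.src e) (G.tgt e)) ∧ (e ∉ Es → rv.r (G.src e) (G.tgt e))) ∧
    (∀ e₁ e₂ : {e : G.E // e ∈ Es}, re.r e₁ e₂ →
      rv.r (G.src e₁.1) (G.src e₂.1) ∧ rv.r (G.tgt e₁.1) (G.tgt e₂.1)) ∧
    ∃ (fV : Quotient rv ≃ H.V) (fE : Quotient re ≃ H.E),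
      ∀ e : {e : G.E // e ∈ Es},
        H.src (fE (Quotient.mk re e)) = fV (Quotient.mk rv (G.src e.1)) ∧
        H.tgt (fE (Quotient.mk re e)) = fV (Quotient.mk rv (G.tgt e.1))

theorem pathEdges_length {a b : G.V} (p : Quiver.Path a b) :
    (pathEdges p).length = p.length := by
  induction p with
  | nil => simp [pathEdges]
  | cons q f ih =>
      rw [pathEdges, List.length_append, ih, Quiver.Path.length_cons]
      rfl

theorem acyclic_length_zero {a b : H.V} (p : Quiver.Path a b) (hab : a = b) :
    p.length = 0 := by
  subst hab
  exact H.acyclic a p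

theorem length_one_toPath {V : Type} [Quiver V] {a b : V} (p : Quiver.Path a b)
    (h : p.length = 1) : ∃ f : a ⟶ b, p = f.toPath := by
  cases p with
  | nil => simp at h
  | cons q f =>
      rw [Quiver.Path.length_cons, Nat.add_eq_right] at h
      have hac := Quiver.Path.eq_of_length_zero q h
      subst hac
      rw [Quiver.Path.eq_nil_of_length_zero q h]
      exact ⟨f, rfl⟩

theorem length_castPath {V : Type} [Quiver V] {a b b' : V} (h : b = b')
    (p : Quiver.Path a b) : (p.cast rfl h).length = p.length := by
  subst h; rfl

theorem pathEdges_toPath {a b : G.V} (f : a ⟶ b) :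
    pathEdges f.toPath = [f.1] := by
  simp [pathEdges, Quiver.Hom.toPath, homEdge]

theorem quotientCausalNet_iff_coarseGraining (G H : CausalNet) :
    IsQuotientCausalNetOf H G ↔ ∃ φ : G ⟶ H, IsCoarseGraining φ := by
  classical
  constructor
  · rintro ⟨rv, Es, re, -, hEdge, -, fV, fE, hfe⟩
    let F : Prefunctor G.V (Paths H.V) :=
      { obj := fun v => fV (Quotient.mk rv v)
        map := fun {a b} f =>
          if h : f.1 ∈ Es then
            Quiver.Hom.toPath
              (show (fV (Quotient.mk rv a) : H.V) ⟶ fV (Quotient.mk rv b) from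
                ⟨fE (Quotient.mk re ⟨f.1, h⟩), by
                    rw [(hfe ⟨f.1, h⟩).1, f.2.1], by
                    rw [(hfe ⟨f.1, h⟩).2, f.2.2]⟩)
          else
            Quiver.Path.cast rfl
              (show fV (Quotient.mk rv a) = fV (Quotient.mk rv b) from by
                have hr := (hEdge f.1).2 h
                rw [f.2.1, f.2.2] at hr
                exact congrArg fV (Quotient.sound hr))
              Quiver.Path.nil }
    refine ⟨Paths.lift F, ⟨?_, ?_⟩, ?_⟩
    · intro v
      obtain ⟨q, rfl⟩ := fV.surjective v
      obtain ⟨w, rfl⟩ := Quotient.exists_rep q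
      exact ⟨w, rfl⟩
    · intro h
      obtain ⟨q, rfl⟩ := fE.surjective h
      obtain ⟨⟨e, he⟩, rfl⟩ := Quotient.exists_rep q
      refine ⟨e, ?_⟩
      show pathEdges (edgePath (Paths.lift F) e) = _
      have hm : edgePath (Paths.lift F) e = F.map (edgeHom G e) :=
        Paths.lift_toPath F (edgeHom G e)
      rw [hm]
      have he' : (edgeHom G e).1 ∈ Es := he
      show pathEdges (if h : (edgeHom G e).1 ∈ Es then _ else _ :
        Quiver.Path (fV (Quotient.mk rv (G.src e))) (fV (Quotient.mk rv (G.tgt e)))) = _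
      rw [dif_pos he', pathEdges_toPath]
      rfl
    · intro e hsub
      have hm : edgePath (Paths.lift F) e = F.map (edgeHom G e) :=
        Paths.lift_toPath F (edgeHom G e)
      rw [IsSubdivisionEdge, hm] at hsub
      by_cases he : e ∈ Es
      · have : (F.map (edgeHom G e)).length = 1 := by
          have he' : (edgeHom G e).1 ∈ Es := he
          show (if h : (edgeHom G e).1 ∈ Es then _ else _ : Quiver.Path _ _).length = 1
          rw [dif_pos he']
          rfl
        change 2 ≤ (F.map (edgeHom G e)).length at hsub
        omega
      · have : (F.map (edgeHom G e)).length = 0 := by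
          have he' : ¬ (edgeHom G e).1 ∈ Es := he
          show (if h : (edgeHom G e).1 ∈ Es then _ else _ : Quiver.Path _ _).length = 0
          rw [dif_neg he']
          exact length_castPath _ _
        change 2 ≤ (F.map (edgeHom G e)).length at hsub
        omega
  · rintro ⟨φ, ⟨hV, hE⟩, hsub⟩
    have hne : ∀ e : G.E, ¬ IsContractionEdge φ e →
        vmap φ (G.src e) ≠ vmap φ (G.tgt e) := by
      intro e hc heq
      exact hc (acyclic_length_zero (edgePath φ e) heq)
    have hlen1 : ∀ e : G.E, ¬ IsContractionEdge φ e → (edgePath φ e).length = 1 := by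
      intro e hc
      have h2 := hsub e
      rw [IsSubdivisionEdge] at h2
      rw [IsContractionEdge] at hc
      omega
    have imgSpec : ∀ e : G.E, ¬ IsContractionEdge φ e →
        ∃ h : H.E, MapsToEdge φ e h ∧ H.src h = vmap φ (G.src e) ∧
          H.tgt h = vmap φ (G.tgt e) := by
      intro e hc
      obtain ⟨f, hf⟩ := length_one_toPath (edgePath φ e) (hlen1 e hc)
      refine ⟨f.1, ?_, f.2.1, f.2.2⟩
      rw [MapsToEdge, hf, pathEdges_toPath]
    set Es : Set G.E := {e : G.E | ¬ IsContractionEdge φ e} with hEs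
    let imgEdge : {e : G.E // e ∈ Es} → H.E := fun e => (imgSpec e.1 e.2).choose
    have imgP := fun (e : {e : G.E // e ∈ Es}) => (imgSpec e.1 e.2).choose_spec
    have imgUniq : ∀ (e : {e : G.E // e ∈ Es}) (h : H.E), MapsToEdge φ e.1 h →
        imgEdge e = h := by
      intro e h hmaps
      have h1 := (imgP e).1
      rw [MapsToEdge] at h1 hmaps
      rw [hmaps] at h1
      exact (List.cons.injEq _ _ _ _).mp h1.symm |>.1
    let rv : Setoid G.V := Setoid.ker (vmap φ)
    let re : Setoid {e : G.E // e ∈ Es} := Setoid.ker imgEdge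
    have hfVsurj : Function.Surjective
        (Quotient.lift (vmap φ) (fun _ _ h => h) : Quotient rv → H.V) := by
      intro v
      obtain ⟨w, hw⟩ := hV v
      exact ⟨Quotient.mk rv w, hw⟩
    have hfVinj : Function.Injective
        (Quotient.lift (vmap φ) (fun _ _ h => h) : Quotient rv → H.V) := by
      intro a b
      induction a using Quotient.ind
      induction b using Quotient.ind
      intro hab
      exact Quotient.sound hab
    have hfEsurj : Function.Surjective
        (Quotient.lift imgEdge (fun _ _ h => h) : Quotient re → H.E) := by
      intro h
      obtain ⟨e, hme⟩ := hE h
      have he : e ∈ Es := by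
        intro hc
        have h1 := hme
        rw [MapsToEdge] at h1
        have := pathEdges_length (edgePath φ e)
        rw [h1] at this
        rw [IsContractionEdge] at hc
        simp at this
        omega
      exact ⟨Quotient.mk re ⟨e, he⟩, imgUniq ⟨e, he⟩ h hme⟩
    have hfEinj : Function.Injective
        (Quotient.lift imgEdge (fun _ _ h => h) : Quotient re → H.E) := by
      intro a b
      induction a using Quotient.ind
      induction b using Quotient.ind
      intro hab
      exact Quotient.sound hab
    refine ⟨rv, Es, re, ?_, ?_, ?_,
      Equiv.ofBijective _ ⟨hfVinj, hfVsurj⟩, Equiv.ofBijective _ ⟨hfEinj, hfEsurj⟩, ?_⟩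
    · intro e he e' hs ht
      intro hc'
      apply hne e he
      have : vmap φ (G.src e') = vmap φ (G.tgt e') :=
        Quiver.Path.eq_of_length_zero (edgePath φ e') hc'
      rwa [hs, ht] at this
    · intro e
      constructor
      · intro he
        exact hne e he
      · intro he
        have hc : IsContractionEdge φ e := not_not.mp he
        exact Quiver.Path.eq_of_length_zero (edgePath φ e) hc
    · intro e₁ e₂ hr
      have h12 : imgEdge e₁ = imgEdge e₂ := hr
      have p1 : H.src (imgEdge e₁) = vmap φ (G.src e₁.1) := (imgP e₁).2.1
      have p2 : H.src (imgEdge e₂) = vmap φ (G.src e₂.1) := (imgP e₂).2.1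
      have q1 : H.tgt (imgEdge e₁) = vmap φ (G.tgt e₁.1) := (imgP e₁).2.2
      have q2 : H.tgt (imgEdge e₂) = vmap φ (G.tgt e₂.1) := (imgP e₂).2.2
      constructor
      · show vmap φ (G.src e₁.1) = vmap φ (G.src e₂.1)
        rw [← p1, ← p2, h12]
      · show vmap φ (G.tgt e₁.1) = vmap φ (G.tgt e₂.1)
        rw [← q1, ← q2, h12]
    · intro e
      constructor
      · exact (imgP e).2.1
      · exact (imgP e).2.2

end CausalNets
end

section
/- Every coarse-graining λ : G₁ → G₂ of causal-nets factors as λ = λ_ε ∘ λ_ν where λ_ν : G₁ → K is a vertex-coarse-graining and λ_ε : K → G₂ is an edge-coarse-graining; moreover the factorization is unique up to isomorphism: for any two such factorizations through K and K′ there is an isomorphism φ : K → K′ with φ ∘ λ_ν = λ_ν′ and λ_ε′ ∘ φ = λ_ε. -/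
open CategoryTheory

namespace CausalNets

variable {G H K : CausalNet}

/-! ### Auxiliary material for the factorization theorem -/

section FactorizationAux

theorem heq_nil_of_length_zero {a b : G.V} (p : Quiver.Path a b) (h : p.length = 0) :
    HEq p (Quiver.Path.nil : Quiver.Path a a) := by
  cases p with
  | nil => exact HEq.rfl
  | cons q f => simp [Quiver.Path.length_cons] at h

theorem exists_toPath_of_length_one {a b : G.V} (p : Quiver.Path a b) (h : p.length = 1) :
    ∃ f : a ⟶ b, p = f.toPath := by
  cases p with
  | nil => simp at h
  | @cons c _ q f =>
    have hq : q.length = 0 := by simpa [Quiver.Path.length_cons] using h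
    have hac : a = c := Quiver.Path.eq_of_length_zero q hq
    subst hac
    have hnil : q = Quiver.Path.nil := eq_of_heq (heq_nil_of_length_zero q hq)
    subst hnil
    exact ⟨f, rfl⟩

theorem pathEdges_cast {a b a' b' : G.V} (h1 : a = a') (h2 : b = b') (p : Quiver.Path a b) :
    pathEdges (p.cast h1 h2) = pathEdges p := by subst h1; subst h2; rfl

theorem length_cast' {a b a' b' : G.V} (h1 : a = a') (h2 : b = b') (p : Quiver.Path a b) :
    (p.cast h1 h2).length = p.length := by subst h1; subst h2; rfl

theorem toPath_cast {a b a' b' : G.V} (h1 : a = a') (h2 : b = b') (f : a ⟶ b) :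
    (Quiver.Hom.cast h1 h2 f).toPath = (Quiver.Hom.toPath f).cast h1 h2 := by
  subst h1; subst h2; rfl

theorem heq_nil_nil {a a' : G.V} (h : a = a') :
    HEq (Quiver.Path.nil : Quiver.Path a a) (Quiver.Path.nil : Quiver.Path a' a') := by
  subst h; exact HEq.rfl

theorem hom_cast_mk {a b : G.V} (k : G.E) (hs : G.src k = a) (ht : G.tgt k = b) :
    (⟨k, hs, ht⟩ : a ⟶ b) = Quiver.Hom.cast hs ht (edgeHom G k) := by
  subst hs; subst ht; rfl

theorem pmap_nil (φ : G ⟶ H) (a : G.V) :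
    pmap φ (Quiver.Path.nil : Quiver.Path a a) = Quiver.Path.nil :=
  (φ : Paths G.V ⥤ Paths H.V).map_id a

theorem pmap_cast (φ : G ⟶ H) {a b a' b' : G.V} (h1 : a = a') (h2 : b = b')
    (p : Quiver.Path a b) :
    pmap φ (p.cast h1 h2) = (pmap φ p).cast (congrArg (vmap φ) h1) (congrArg (vmap φ) h2) := by
  subst h1; subst h2; rfl

theorem pmap_toPath (φ : G ⟶ H) {a b : G.V} (e : G.E) (hs : G.src e = a) (ht : G.tgt e = b) :
    pmap φ (Quiver.Hom.toPath (⟨e, hs, ht⟩ : a ⟶ b)) =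
      (edgePath φ e).cast (congrArg (vmap φ) hs) (congrArg (vmap φ) ht) := by
  subst hs; subst ht; rfl

theorem pmap_cons (φ : G ⟶ H) {a b c : G.V} (q : Quiver.Path a b) (f : b ⟶ c) :
    pmap φ (q.cons f) = (pmap φ q).comp (pmap φ (Quiver.Hom.toPath f)) :=
  (φ : Paths G.V ⥤ Paths H.V).map_comp q (Quiver.Hom.toPath f)

theorem pmap_length (φ : G ⟶ H) (hseg : ∀ e : G.E, (edgePath φ e).length = 1)
    {a b : G.V} (p : Quiver.Path a b) : (pmap φ p).length = p.length := by
  induction p with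
  | nil => rw [pmap_nil]; rfl
  | cons q f ih =>
    obtain ⟨e, hs, ht⟩ := f
    rw [pmap_cons, Quiver.Path.length_comp, ih, pmap_toPath φ e hs ht, length_cast', hseg]
    rfl

theorem length_one_of_mapsToEdge (φ : G ⟶ H) {e : G.E} {h : H.E} (hm : MapsToEdge φ e h) :
    (edgePath φ e).length = 1 := by
  rw [← pathEdges_length, hm]
  rfl

theorem mapsToEdge_unique (φ : G ⟶ H) {e : G.E} {h h' : H.E}
    (hm : MapsToEdge φ e h) (hm' : MapsToEdge φ e h') : h = h' := by
  have hh : ([h] : List H.E) = [h'] := hm.symm.trans hm'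
  simpa using hh

theorem segment_struct (φ : G ⟶ H) {e : G.E} (h1 : (edgePath φ e).length = 1) :
    ∃ h : H.E, H.src h = vmap φ (G.src e) ∧ H.tgt h = vmap φ (G.tgt e) ∧ MapsToEdge φ e h := by
  obtain ⟨f, hf⟩ := exists_toPath_of_length_one _ h1
  obtain ⟨h, hs, ht⟩ := f
  refine ⟨h, hs, ht, ?_⟩
  show pathEdges (edgePath φ e) = [h]
  rw [hf]
  simp [pathEdges, Quiver.Hom.toPath, homEdge]

theorem src_tgt_of_mapsToEdge (φ : G ⟶ H) {e : G.E} {k : H.E} (hm : MapsToEdge φ e k) :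
    H.src k = vmap φ (G.src e) ∧ H.tgt k = vmap φ (G.tgt e) := by
  obtain ⟨k', hs, ht, hm'⟩ := segment_struct φ (length_one_of_mapsToEdge φ hm)
  have hk : k' = k := mapsToEdge_unique φ hm' hm
  subst hk
  exact ⟨hs, ht⟩

theorem pmap_heq_of_mapsToEdge {K2 : CausalNet} (φ : G ⟶ H) (ψ : H ⟶ K2) {e : G.E} {k : H.E}
    (hm : MapsToEdge φ e k) : HEq (pmap ψ (edgePath φ e)) (edgePath ψ k) := by
  obtain ⟨f, hf⟩ := exists_toPath_of_length_one _ (length_one_of_mapsToEdge φ hm)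
  obtain ⟨k₀, hs, ht⟩ := f
  have hk : k₀ = k := by
    have hh : pathEdges (edgePath φ e) = [k] := hm
    rw [hf] at hh
    simpa [pathEdges, Quiver.Hom.toPath, homEdge] using hh
  subst hk
  rw [hf, pmap_toPath ψ k₀ hs ht]
  exact Quiver.Path.cast_heq _ _ _

theorem heq_toPath_of_mapsToEdge (φ : G ⟶ H) {e : G.E} {k : H.E} (hm : MapsToEdge φ e k) :
    HEq (edgePath φ e) (Quiver.Hom.toPath (edgeHom H k)) := by
  obtain ⟨f, hf⟩ := exists_toPath_of_length_one _ (length_one_of_mapsToEdge φ hm)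
  obtain ⟨k₀, hs, ht⟩ := f
  have hk : k₀ = k := by
    have hh : pathEdges (edgePath φ e) = [k] := hm
    rw [hf] at hh
    simpa [pathEdges, Quiver.Hom.toPath, homEdge] using hh
  subst hk
  rw [hf, hom_cast_mk k₀ hs ht, toPath_cast hs ht]
  exact Quiver.Path.cast_heq _ _ _

end FactorizationAux

section Construction

variable {G₁ G₂ : CausalNet}

/-- The middle causal-net of the factorization: vertices of `G₂`, and the
segment edges of `G₁`. -/
noncomputable def midNet (lam : G₁ ⟶ G₂) : CausalNet where
  V := G₂.V
  E := { e : G₁.E // (edgePath lam e).length = 1 }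
  src e := vmap lam (G₁.src e.1)
  tgt e := vmap lam (G₁.tgt e.1)
  fintypeV := G₂.fintypeV
  fintypeE := Fintype.ofFinite _
  acyclic :=
    noCycleData_of_map _ _ G₂ id (fun e => Classical.choose (segment_struct lam e.2))
      (fun e => (Classical.choose_spec (segment_struct lam e.2)).1)
      (fun e => (Classical.choose_spec (segment_struct lam e.2)).2.1)

/-- Transport a vertex of `G₂` to a vertex of `midNet lam`. -/
def toMidV (lam : G₁ ⟶ G₂) (v : G₂.V) : (midNet lam).V := v

theorem contraction_vertex_eq (lam : G₁ ⟶ G₂) (e : G₁.E)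
    (h0 : (edgePath lam e).length = 0) :
    vmap lam (G₁.src e) = vmap lam (G₁.tgt e) :=
  Quiver.Path.eq_of_length_zero _ h0

open Classical in
/-- The image in `midNet lam` of an edge of `G₁`. -/
noncomputable def nuPath (lam : G₁ ⟶ G₂) (hns : ∀ e : G₁.E, ¬ IsSubdivisionEdge lam e)
    (e : G₁.E) :
    Quiver.Path (toMidV lam (vmap lam (G₁.src e))) (toMidV lam (vmap lam (G₁.tgt e))) :=
  if h : (edgePath lam e).length = 1 then
    Quiver.Hom.toPath (edgeHom (midNet lam) ⟨e, h⟩)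
  else
    Quiver.Path.nil.cast rfl (congrArg (toMidV lam) (contraction_vertex_eq lam e
      (by have h2 : ¬ 2 ≤ (edgePath lam e).length := hns e; omega)))

noncomputable def nuPre (lam : G₁ ⟶ G₂) (hns : ∀ e : G₁.E, ¬ IsSubdivisionEdge lam e) :
    G₁.V ⥤q Paths (midNet lam).V where
  obj v := toMidV lam (vmap lam v)
  map f := (nuPath lam hns f.1).cast (congrArg (fun x => toMidV lam (vmap lam x)) f.2.1)
    (congrArg (fun x => toMidV lam (vmap lam x)) f.2.2)

noncomputable def lamNu (lam : G₁ ⟶ G₂) (hns : ∀ e : G₁.E, ¬ IsSubdivisionEdge lam e) :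
    G₁ ⟶ midNet lam :=
  Paths.lift (nuPre lam hns)

noncomputable def epsPre (lam : G₁ ⟶ G₂) : (midNet lam).V ⥤q Paths G₂.V where
  obj v := v
  map f := (edgePath lam f.1.1).cast f.2.1 f.2.2

noncomputable def lamEps (lam : G₁ ⟶ G₂) : midNet lam ⟶ G₂ :=
  Paths.lift (epsPre lam)

theorem edgePath_lamNu (lam : G₁ ⟶ G₂) (hns : ∀ e : G₁.E, ¬ IsSubdivisionEdge lam e)
    (e : G₁.E) : edgePath (lamNu lam hns) e = nuPath lam hns e := by
  show (Paths.lift (nuPre lam hns)).map (Quiver.Hom.toPath (edgeHom G₁ e)) = nuPath lam hns e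
  rw [Paths.lift_toPath]
  exact Quiver.Path.cast_rfl_rfl _

theorem edgePath_lamEps (lam : G₁ ⟶ G₂) (k : (midNet lam).E) :
    edgePath (lamEps lam) k = edgePath lam k.1 := by
  show (Paths.lift (epsPre lam)).map (Quiver.Hom.toPath (edgeHom (midNet lam) k)) =
    edgePath lam k.1
  rw [Paths.lift_toPath]
  exact Quiver.Path.cast_rfl_rfl _

theorem lamNu_isVCG (lam : G₁ ⟶ G₂) (hlam : IsCoarseGraining lam) :
    IsVertexCoarseGraining (lamNu lam hlam.2) := by
  refine ⟨⟨⟨?_, ?_⟩, ?_⟩, ?_⟩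
  · intro v
    obtain ⟨w, hw⟩ := hlam.1.1 v
    exact ⟨w, hw⟩
  · intro k
    obtain ⟨e, he⟩ := k
    refine ⟨e, ?_⟩
    show pathEdges (edgePath (lamNu lam hlam.2) e) = _
    rw [edgePath_lamNu]
    unfold nuPath
    rw [dif_pos he]
    simp only [pathEdges, Quiver.Hom.toPath, homEdge]
    erw [pathEdges, pathEdges]
    rfl
  · intro e hsub
    have h2 : 2 ≤ (edgePath (lamNu lam hlam.2) e).length := hsub
    rw [edgePath_lamNu] at h2
    unfold nuPath at h2
    by_cases h : (edgePath lam e).length = 1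
    · rw [dif_pos h] at h2
      erw [Quiver.Path.length_cons, Quiver.Path.length_nil] at h2
      simp at h2
    · erw [dif_neg h, length_cast'] at h2
      simp at h2
  · intro k e₁ e₂ hm₁ hm₂
    have hm₁' : pathEdges (edgePath (lamNu lam hlam.2) e₁) = [k] := hm₁
    have hm₂' : pathEdges (edgePath (lamNu lam hlam.2) e₂) = [k] := hm₂
    rw [edgePath_lamNu] at hm₁' hm₂'
    unfold nuPath at hm₁' hm₂'
    by_cases h₁ : (edgePath lam e₁).length = 1
    · by_cases h₂ : (edgePath lam e₂).length = 1
      · rw [dif_pos h₁] at hm₁'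
        rw [dif_pos h₂] at hm₂'
        erw [pathEdges, pathEdges] at hm₁' hm₂'
        simp at hm₁' hm₂'
        have h12 : (⟨e₁, h₁⟩ : (midNet lam).E) = ⟨e₂, h₂⟩ := hm₁'.trans hm₂'.symm
        exact congrArg Subtype.val h12
      · erw [dif_neg h₂, pathEdges_cast] at hm₂'
        simp [pathEdges] at hm₂'
    · erw [dif_neg h₁, pathEdges_cast] at hm₁'
      simp [pathEdges] at hm₁'

theorem lamEps_isECG (lam : G₁ ⟶ G₂) (hlam : IsCoarseGraining lam) :
    IsEdgeCoarseGraining (lamEps lam) := by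
  refine ⟨⟨⟨?_, ?_⟩, ?_⟩, ?_, ?_⟩
  · intro v
    exact ⟨v, rfl⟩
  · intro h
    obtain ⟨e, hme⟩ := hlam.1.2 h
    have hl := length_one_of_mapsToEdge lam hme
    refine ⟨⟨e, hl⟩, ?_⟩
    show pathEdges (edgePath (lamEps lam) ⟨e, hl⟩) = [h]
    erw [edgePath_lamEps]
    exact hme
  · intro k hsub
    have h2 : 2 ≤ (edgePath (lamEps lam) k).length := hsub
    erw [edgePath_lamEps] at h2
    have : (edgePath lam k.1).length = 1 := k.2
    change 2 ≤ (edgePath lam k.1).length at h2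
    omega
  · intro a b hab
    exact hab
  · intro k hc
    have h0 : (edgePath (lamEps lam) k).length = 0 := hc
    erw [edgePath_lamEps] at h0
    have : (edgePath lam k.1).length = 1 := k.2
    change (edgePath lam k.1).length = 0 at h0
    omega

theorem lamNu_comp_lamEps (lam : G₁ ⟶ G₂) (hns : ∀ e : G₁.E, ¬ IsSubdivisionEdge lam e) :
    lamNu lam hns ≫ lamEps lam = lam := by
  refine Paths.ext_functor rfl ?_
  intro a b f
  refine (conj_eqToHom_iff_heq' _ _ _ _).mpr ?_
  obtain ⟨e, hs, ht⟩ := f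
  subst hs; subst ht
  refine heq_of_eq ?_
  show pmap (lamEps lam) (edgePath (lamNu lam hns) e) = edgePath lam e
  rw [edgePath_lamNu]
  unfold nuPath
  by_cases h : (edgePath lam e).length = 1
  · rw [dif_pos h]
    exact edgePath_lamEps lam ⟨e, h⟩
  · erw [dif_neg h, pmap_cast, pmap_nil, Quiver.Path.cast_eq_iff_heq]
    have h0 : (edgePath lam e).length = 0 := by
      have h2 : ¬ 2 ≤ (edgePath lam e).length := hns e
      omega
    exact (heq_nil_of_length_zero _ h0).symm

end Construction

section Uniqueness

variable {G₁ G₂ KA KB : CausalNet}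

/-- The data of one factorization of `lam` through a vertex-coarse-graining
followed by an edge-coarse-graining. -/
structure FactData (lam : G₁ ⟶ G₂) (lν : G₁ ⟶ KA) (lε : KA ⟶ G₂) : Prop where
  hν : IsVertexCoarseGraining lν
  hε : IsEdgeCoarseGraining lε
  hcomp : lν ≫ lε = lam

variable {lam : G₁ ⟶ G₂} {lν : G₁ ⟶ KA} {lε : KA ⟶ G₂} {lν' : G₁ ⟶ KB} {lε' : KB ⟶ G₂}

theorem FactData.vcomp (D : FactData lam lν lε) (w : G₁.V) :
    vmap lε (vmap lν w) = vmap lam w := by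
  have h := D.hcomp
  subst h
  rfl

theorem FactData.seg (D : FactData lam lν lε) (k : KA.E) : (edgePath lε k).length = 1 := by
  have h1 : ¬ 2 ≤ (edgePath lε k).length := D.hε.1.2 k
  have h2 : ¬ (edgePath lε k).length = 0 := D.hε.2.2 k
  omega

theorem FactData.edgePath_comp (D : FactData lam lν lε) (e : G₁.E) :
    HEq (edgePath lam e) (pmap lε (edgePath lν e)) := by
  have h := D.hcomp
  subst h
  exact HEq.rfl

theorem FactData.len_lam (D : FactData lam lν lε) (e : G₁.E) :
    (edgePath lν e).length = (edgePath lam e).length := by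
  have h := D.hcomp
  subst h
  exact (pmap_length lε D.seg _).symm

theorem FactData.pre_unique (D : FactData lam lν lε) {e₁ e₂ : G₁.E} {k : KA.E}
    (h₁ : MapsToEdge lν e₁ k) (h₂ : MapsToEdge lν e₂ k) : e₁ = e₂ :=
  D.hν.2 k e₁ e₂ h₁ h₂

/-- Vertex component of the comparison morphism between two factorizations. -/
noncomputable def bridgeObj (D : FactData lam lν lε) (D' : FactData lam lν' lε')
    (v : KA.V) : KB.V :=
  vmap lν' (Classical.choose (D.hν.1.1.1 v))

theorem bridgeObj_spec (D : FactData lam lν lε) (D' : FactData lam lν' lε') (w : G₁.V) :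
    bridgeObj D D' (vmap lν w) = vmap lν' w := by
  apply D'.hε.2.1
  show vmap lε' (vmap lν' (Classical.choose (D.hν.1.1.1 (vmap lν w)))) = vmap lε' (vmap lν' w)
  rw [D'.vcomp, D'.vcomp, ← D.vcomp, ← D.vcomp, Classical.choose_spec (D.hν.1.1.1 (vmap lν w))]

theorem bridge_ex (D : FactData lam lν lε) (D' : FactData lam lν' lε') (k : KA.E) :
    ∃ k' : KB.E, ∃ e : G₁.E, MapsToEdge lν e k ∧ MapsToEdge lν' e k' := by
  obtain ⟨e, he⟩ := D.hν.1.1.2 k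
  have hl : (edgePath lν' e).length = 1 := by
    rw [D'.len_lam, ← D.len_lam]
    exact length_one_of_mapsToEdge lν he
  obtain ⟨k', -, -, hk'⟩ := segment_struct lν' hl
  exact ⟨k', e, he, hk'⟩

/-- Edge component of the comparison morphism between two factorizations. -/
noncomputable def bridgeEdge (D : FactData lam lν lε) (D' : FactData lam lν' lε')
    (k : KA.E) : KB.E :=
  Classical.choose (bridge_ex D D' k)

theorem bridgeEdge_spec (D : FactData lam lν lε) (D' : FactData lam lν' lε') (k : KA.E) :
    ∃ e : G₁.E, MapsToEdge lν e k ∧ MapsToEdge lν' e (bridgeEdge D D' k) :=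
  Classical.choose_spec (bridge_ex D D' k)

theorem bridgeEdge_eq (D : FactData lam lν lε) (D' : FactData lam lν' lε') {k : KA.E}
    {k' : KB.E} (e : G₁.E) (h1 : MapsToEdge lν e k) (h2 : MapsToEdge lν' e k') :
    bridgeEdge D D' k = k' := by
  obtain ⟨e₀, h₀, h₀'⟩ := bridgeEdge_spec D D' k
  have he : e₀ = e := D.pre_unique h₀ h1
  subst he
  exact mapsToEdge_unique lν' h₀' h2

theorem bridgeEdge_src_tgt (D : FactData lam lν lε) (D' : FactData lam lν' lε') (k : KA.E) :
    KB.src (bridgeEdge D D' k) = bridgeObj D D' (KA.src k) ∧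
    KB.tgt (bridgeEdge D D' k) = bridgeObj D D' (KA.tgt k) := by
  obtain ⟨e, h1, h2⟩ := bridgeEdge_spec D D' k
  obtain ⟨hs, ht⟩ := src_tgt_of_mapsToEdge lν h1
  obtain ⟨hs', ht'⟩ := src_tgt_of_mapsToEdge lν' h2
  constructor
  · rw [hs', hs, bridgeObj_spec]
  · rw [ht', ht, bridgeObj_spec]

noncomputable def bridgePre (D : FactData lam lν lε) (D' : FactData lam lν' lε') :
    KA.V ⥤q Paths KB.V where
  obj := bridgeObj D D'
  map f := (Quiver.Hom.toPath (edgeHom KB (bridgeEdge D D' f.1))).cast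
    (by rw [(bridgeEdge_src_tgt D D' f.1).1, f.2.1])
    (by rw [(bridgeEdge_src_tgt D D' f.1).2, f.2.2])

/-- The comparison morphism between two factorizations. -/
noncomputable def bridge (D : FactData lam lν lε) (D' : FactData lam lν' lε') : KA ⟶ KB :=
  Paths.lift (bridgePre D D')

theorem edgePath_bridge (D : FactData lam lν lε) (D' : FactData lam lν' lε') (k : KA.E) :
    edgePath (bridge D D') k =
      (Quiver.Hom.toPath (edgeHom KB (bridgeEdge D D' k))).cast
        (bridgeEdge_src_tgt D D' k).1 (bridgeEdge_src_tgt D D' k).2 := by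
  show (Paths.lift (bridgePre D D')).map (Quiver.Hom.toPath (edgeHom KA k)) = _
  rw [Paths.lift_toPath]
  rfl

theorem bridge_comp_nu (D : FactData lam lν lε) (D' : FactData lam lν' lε') :
    lν ≫ bridge D D' = lν' := by
  refine Paths.ext_functor (funext fun w => bridgeObj_spec D D' w) ?_
  intro a b f
  refine (conj_eqToHom_iff_heq' _ _ _ _).mpr ?_
  obtain ⟨e, hs, ht⟩ := f
  subst hs; subst ht
  show HEq (pmap (bridge D D') (edgePath lν e)) (edgePath lν' e)
  by_cases h1 : (edgePath lν e).length = 1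
  · obtain ⟨k, -, -, hm⟩ := segment_struct lν h1
    have hl' : (edgePath lν' e).length = 1 := by
      rw [D'.len_lam, ← D.len_lam]
      exact h1
    obtain ⟨k', -, -, hm'⟩ := segment_struct lν' hl'
    have hbk : bridgeEdge D D' k = k' := bridgeEdge_eq D D' e hm hm'
    refine (pmap_heq_of_mapsToEdge lν (bridge D D') hm).trans ?_
    rw [edgePath_bridge]
    refine (Quiver.Path.cast_heq _ _ _).trans ?_
    rw [hbk]
    exact (heq_toPath_of_mapsToEdge lν' hm').symm
  · have h0 : (edgePath lν e).length = 0 := by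
      have h2 : ¬ 2 ≤ (edgePath lν e).length := D.hν.1.2 e
      omega
    have h0' : (edgePath lν' e).length = 0 := by
      rw [D'.len_lam, ← D.len_lam]
      exact h0
    have q0 : vmap lν (G₁.src e) = vmap lν (G₁.tgt e) :=
      Quiver.Path.eq_of_length_zero _ h0
    have e1 : edgePath lν e = Quiver.Path.nil.cast rfl q0 :=
      (Quiver.Path.eq_cast_iff_heq rfl q0 _ _).mpr (heq_nil_of_length_zero _ h0)
    rw [e1, pmap_cast, pmap_nil]
    refine (Quiver.Path.cast_heq _ _ _).trans ?_
    refine HEq.trans (heq_nil_nil ?_) (heq_nil_of_length_zero _ h0').symm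
    exact bridgeObj_spec D D' (G₁.src e)
  
theorem bridge_comp_eps (D : FactData lam lν lε) (D' : FactData lam lν' lε') :
    bridge D D' ≫ lε' = lε := by
  refine Paths.ext_functor (funext fun v => ?_) ?_
  · show vmap lε' (vmap lν' (Classical.choose (D.hν.1.1.1 v))) = vmap lε v
    rw [D'.vcomp, ← D.vcomp, Classical.choose_spec (D.hν.1.1.1 v)]
  · intro a b f
    refine (conj_eqToHom_iff_heq' _ _ _ _).mpr ?_
    obtain ⟨k, hs, ht⟩ := f
    subst hs; subst ht
    show HEq (pmap lε' (edgePath (bridge D D') k)) (edgePath lε k)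
    erw [edgePath_bridge, pmap_cast]
    refine (Quiver.Path.cast_heq _ _ _).trans ?_
    obtain ⟨e, h1, h2⟩ := bridgeEdge_spec D D' k
    have A : HEq (edgePath lam e) (edgePath lε k) :=
      (D.edgePath_comp e).trans (pmap_heq_of_mapsToEdge lν lε h1)
    have B : HEq (edgePath lam e) (edgePath lε' (bridgeEdge D D' k)) :=
      (D'.edgePath_comp e).trans (pmap_heq_of_mapsToEdge lν' lε' h2)
    exact HEq.trans (B.symm) A

theorem bridge_bridge (D : FactData lam lν lε) (D' : FactData lam lν' lε') :
    bridge D D' ≫ bridge D' D = 𝟙 KA := by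
  refine Paths.ext_functor (funext fun v => ?_) ?_
  · show bridgeObj D' D (vmap lν' (Classical.choose (D.hν.1.1.1 v))) = v
    rw [bridgeObj_spec D' D, Classical.choose_spec (D.hν.1.1.1 v)]
  · intro a b f
    refine (conj_eqToHom_iff_heq' _ _ _ _).mpr ?_
    obtain ⟨k, hs, ht⟩ := f
    subst hs; subst ht
    show HEq (pmap (bridge D' D) (edgePath (bridge D D') k))
      (Quiver.Hom.toPath (edgeHom KA k))
    erw [edgePath_bridge, pmap_cast]
    refine (Quiver.Path.cast_heq _ _ _).trans ?_
    show HEq (edgePath (bridge D' D) (bridgeEdge D D' k)) _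
    rw [edgePath_bridge]
    refine (Quiver.Path.cast_heq _ _ _).trans ?_
    have hk : bridgeEdge D' D (bridgeEdge D D' k) = k := by
      obtain ⟨e, h1, h2⟩ := bridgeEdge_spec D D' k
      exact bridgeEdge_eq D' D e h2 h1
    rw [hk]

end Uniqueness

theorem coarseGraining_factorization {G₁ G₂ : CausalNet} (lam : G₁ ⟶ G₂)
    (hlam : IsCoarseGraining lam) :
    (∃ (K : CausalNet) (lν : G₁ ⟶ K) (lε : K ⟶ G₂),
        IsVertexCoarseGraining lν ∧ IsEdgeCoarseGraining lε ∧ lν ≫ lε = lam) ∧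
    (∀ (K K' : CausalNet) (lν : G₁ ⟶ K) (lε : K ⟶ G₂) (lν' : G₁ ⟶ K') (lε' : K' ⟶ G₂),
        IsVertexCoarseGraining lν → IsEdgeCoarseGraining lε → lν ≫ lε = lam →
        IsVertexCoarseGraining lν' → IsEdgeCoarseGraining lε' → lν' ≫ lε' = lam →
        ∃ φ : K ⟶ K', IsIso φ ∧ lν ≫ φ = lν' ∧ φ ≫ lε' = lε) := by
  constructor
  · exact ⟨midNet lam, lamNu lam hlam.2, lamEps lam, lamNu_isVCG lam hlam,
      lamEps_isECG lam hlam, lamNu_comp_lamEps lam hlam.2⟩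
  · intro K K' lν lε lν' lε' h1 h2 h3 h4 h5 h6
    have D : FactData lam lν lε := ⟨h1, h2, h3⟩
    have D' : FactData lam lν' lε' := ⟨h4, h5, h6⟩
    exact ⟨bridge D D', ⟨⟨bridge D' D, bridge_bridge D D', bridge_bridge D' D⟩⟩,
      bridge_comp_nu D D', bridge_comp_eps D D'⟩

end CausalNets
end

section
/- Let G be a causal-net and S a nonempty set of vertices of G. There exist a causal-net H and a merging λ : G → H having S as the vertex set of one of its fibers if and only if S is a coclique of G. -/
open CategoryTheory

namespace CausalNets

variable {G H K : CausalNet}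

section MergingAux

variable {G H : CausalNet}

theorem length_zero_of_endpoints_eq (K : CausalNet) {a b : K.V} (h : a = b)
    (p : Quiver.Path a b) : p.length = 0 := by
  subst h; exact K.acyclic a p

theorem pmap_cons_length (φ : G ⟶ H) {a b c : G.V} (q : Quiver.Path a b) (f : b ⟶ c) :
    (pmap φ (q.cons f)).length = (pmap φ q).length + (pmap φ f.toPath).length := by
  have h : pmap φ (q.cons f) = (pmap φ q).comp (pmap φ f.toPath) :=
    (φ : Paths G.V ⥤ Paths H.V).map_comp (X := a) (Y := b) (Z := c) q f.toPath
  rw [h, Quiver.Path.length_comp]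

theorem pmap_toPath_length_one (φ : G ⟶ H)
    (h1 : ∀ e : G.E, ¬ IsSubdivisionEdge φ e) (h2 : ∀ e : G.E, ¬ IsContractionEdge φ e)
    {a b : G.V} (f : a ⟶ b) : (pmap φ f.toPath).length = 1 := by
  obtain ⟨e, rfl, rfl⟩ := f
  have hA := h1 e
  have hB := h2 e
  unfold IsSubdivisionEdge at hA
  unfold IsContractionEdge at hB
  show (edgePath φ e).length = 1
  omega

theorem pmap_length_le (φ : G ⟶ H)
    (h1 : ∀ e : G.E, ¬ IsSubdivisionEdge φ e) (h2 : ∀ e : G.E, ¬ IsContractionEdge φ e)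
    {a b : G.V} (p : Quiver.Path a b) : p.length ≤ (pmap φ p).length := by
  induction p with
  | nil => exact Nat.zero_le _
  | cons q f ih =>
      rw [pmap_cons_length φ q f, pmap_toPath_length_one φ h1 h2 f,
        Quiver.Path.length_cons]
      omega

/-- The setoid identifying all elements of `S`. -/
def mergeSetoid (G : CausalNet) (S : Set G.V) : Setoid G.V where
  r a b := a = b ∨ (a ∈ S ∧ b ∈ S)
  iseqv := by
    refine ⟨fun a => Or.inl rfl, ?_, ?_⟩
    · rintro a b (rfl | ⟨h1, h2⟩)
      · exact Or.inl rfl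
      · exact Or.inr ⟨h2, h1⟩
    · rintro a b c (rfl | ⟨h1, h2⟩) (rfl | ⟨h3, h4⟩)
      · exact Or.inl rfl
      · exact Or.inr ⟨h3, h4⟩
      · exact Or.inr ⟨h1, h2⟩
      · exact Or.inr ⟨h1, h4⟩

/-- Reachability-or-through-`S` relation. -/
def mergeRel (G : CausalNet) (S : Set G.V) (a b : G.V) : Prop :=
  Reaches G a b ∨ ((∃ s ∈ S, Reaches G a s) ∧ ∃ t ∈ S, Reaches G t b)

theorem mergeRel_congr (G : CausalNet) (S : Set G.V) {a b a' b' : G.V}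
    (ha : (mergeSetoid G S).r a a') (hb : (mergeSetoid G S).r b b') :
    mergeRel G S a b → mergeRel G S a' b' := by
  rintro (hp | ⟨⟨s, hs, hp⟩, ⟨t, ht, hq⟩⟩)
  · obtain ⟨p⟩ := (hp : Nonempty _)
    rcases ha with rfl | ⟨ha1, ha2⟩
    · rcases hb with rfl | ⟨hb1, hb2⟩
      · exact Or.inl ⟨p⟩
      · exact Or.inr ⟨⟨b, hb1, ⟨p⟩⟩, ⟨b', hb2, ⟨Quiver.Path.nil⟩⟩⟩
    · rcases hb with rfl | ⟨hb1, hb2⟩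
      · exact Or.inr ⟨⟨a', ha2, ⟨Quiver.Path.nil⟩⟩, ⟨a, ha1, ⟨p⟩⟩⟩
      · exact Or.inr ⟨⟨a', ha2, ⟨Quiver.Path.nil⟩⟩, ⟨b', hb2, ⟨Quiver.Path.nil⟩⟩⟩
  · obtain ⟨p⟩ := (hp : Nonempty _)
    obtain ⟨q⟩ := (hq : Nonempty _)
    rcases ha with rfl | ⟨ha1, ha2⟩
    · rcases hb with rfl | ⟨hb1, hb2⟩
      · exact Or.inr ⟨⟨s, hs, ⟨p⟩⟩, ⟨t, ht, ⟨q⟩⟩⟩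
      · exact Or.inr ⟨⟨s, hs, ⟨p⟩⟩, ⟨b', hb2, ⟨Quiver.Path.nil⟩⟩⟩
    · rcases hb with rfl | ⟨hb1, hb2⟩
      · exact Or.inr ⟨⟨a', ha2, ⟨Quiver.Path.nil⟩⟩, ⟨t, ht, ⟨q⟩⟩⟩
      · exact Or.inr ⟨⟨a', ha2, ⟨Quiver.Path.nil⟩⟩, ⟨b', hb2, ⟨Quiver.Path.nil⟩⟩⟩

/-- The preorder on the quotient induced by `mergeRel`. -/
def mergePreorder (G : CausalNet) (S : Set G.V) : Preorder (Quotient (mergeSetoid G S)) where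
  le := Quotient.lift₂ (mergeRel G S) (by
    intro a b a' b' ha hb
    exact propext ⟨mergeRel_congr G S ha hb,
      mergeRel_congr G S ((mergeSetoid G S).symm ha) ((mergeSetoid G S).symm hb)⟩)
  le_refl := by
    rintro ⟨a⟩
    exact Or.inl ⟨Quiver.Path.nil⟩
  le_trans := by
    rintro ⟨a⟩ ⟨b⟩ ⟨c⟩ hab hbc
    rcases hab with hp | ⟨L, ⟨t, ht, hq⟩⟩
    · obtain ⟨p⟩ := (hp : Nonempty _)
      rcases hbc with hq | ⟨⟨s, hs, hr⟩, R⟩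
      · obtain ⟨q⟩ := (hq : Nonempty _)
        exact Or.inl ⟨p.comp q⟩
      · obtain ⟨r⟩ := (hr : Nonempty _)
        exact Or.inr ⟨⟨s, hs, ⟨p.comp r⟩⟩, R⟩
    · obtain ⟨q⟩ := (hq : Nonempty _)
      rcases hbc with hr | ⟨_, R⟩
      · obtain ⟨r⟩ := (hr : Nonempty _)
        exact Or.inr ⟨L, ⟨t, ht, ⟨q.comp r⟩⟩⟩
      · exact Or.inr ⟨L, R⟩

/-- The causal-net obtained by merging the coclique `S` to a point. -/
noncomputable def mergeNet (G : CausalNet) (S : Set G.V) (hcoc : IsCoclique G S) :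
    CausalNet where
  V := Quotient (mergeSetoid G S)
  E := G.E
  src e := Quotient.mk (mergeSetoid G S) (G.src e)
  tgt e := Quotient.mk (mergeSetoid G S) (G.tgt e)
  fintypeV := Fintype.ofFinite _
  fintypeE := G.fintypeE
  acyclic := by
    letI := mergePreorder G S
    refine noCycleData_of_lt _ _ (fun e => ?_)
    rw [lt_iff_le_not_ge]
    constructor
    · exact Or.inl ⟨(edgeHom G e).toPath⟩
    · rintro (hp | ⟨⟨s, hs, hp⟩, ⟨t, ht, hq⟩⟩)
      · obtain ⟨p⟩ := (hp : Nonempty _)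
        have h0 := G.acyclic (G.src e) (((edgeHom G e).toPath).comp p)
        rw [Quiver.Path.length_comp] at h0
        have h1 : ((edgeHom G e).toPath : Quiver.Path (G.src e) (G.tgt e)).length = 1 := rfl
        omega
      · obtain ⟨p⟩ := (hp : Nonempty _)
        obtain ⟨q⟩ := (hq : Nonempty _)
        by_cases hts : t = s
        · subst hts
          have h0 := length_zero_of_endpoints_eq G rfl
            ((q.comp (edgeHom G e).toPath).comp p)
          rw [Quiver.Path.length_comp, Quiver.Path.length_comp] at h0
          have h1 : ((edgeHom G e).toPath : Quiver.Path (G.src e) (G.tgt e)).length = 1 := rfl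
          omega
        · exact hcoc t ht s hs hts ⟨(q.comp (edgeHom G e).toPath).comp p⟩

/-- The prefunctor underlying the merging morphism. -/
def mergePrefunctor (G : CausalNet) (S : Set G.V) (hcoc : IsCoclique G S) :
    G.V ⥤q (mergeNet G S hcoc).V where
  obj w := Quotient.mk (mergeSetoid G S) w
  map {a b} f := ⟨f.1, congrArg _ f.2.1, congrArg _ f.2.2⟩

/-- The merging morphism onto `mergeNet`. -/
noncomputable def mergeMor (G : CausalNet) (S : Set G.V) (hcoc : IsCoclique G S) :
    G ⟶ mergeNet G S hcoc where
  obj w := (mergePrefunctor G S hcoc).obj w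
  map {a b} p := (mergePrefunctor G S hcoc).mapPath p
  map_id _ := rfl
  map_comp p q := (mergePrefunctor G S hcoc).mapPath_comp p q

end MergingAux

theorem merging_fiber_iff_coclique' (G : CausalNet) (S : Set G.V) (hS : S.Nonempty) :
    (∃ (H : CausalNet) (φ : G ⟶ H) (v : H.V),
        IsMerging φ ∧ S = {w : G.V | vmap φ w = v}) ↔ IsCoclique G S := by
  constructor
  · rintro ⟨H, φ, v, hm, hset⟩ a ha b hb hne hr
    obtain ⟨p⟩ := (hr : Nonempty _)
    have h1 : ∀ e : G.E, ¬ IsSubdivisionEdge φ e := hm.1.1.2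
    have h2 : ∀ e : G.E, ¬ IsContractionEdge φ e := hm.2
    have hlen : 1 ≤ p.length := by
      rcases Nat.eq_zero_or_pos p.length with h0 | h
      · exact absurd (Quiver.Path.eq_of_length_zero p h0) hne
      · exact h
    have hple := pmap_length_le φ h1 h2 p
    have hva : vmap φ a = v := by rw [hset] at ha; exact ha
    have hvb : vmap φ b = v := by rw [hset] at hb; exact hb
    have h0 := length_zero_of_endpoints_eq H (hva.trans hvb.symm) (pmap φ p)
    omega
  · intro hcoc
    obtain ⟨s₀, hs₀⟩ := hS
    refine ⟨mergeNet G S hcoc, mergeMor G S hcoc,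
      Quotient.mk (mergeSetoid G S) s₀, ⟨⟨⟨⟨?_, ?_⟩, ?_⟩, ?_⟩, ?_⟩, ?_⟩
    · rintro ⟨w⟩
      exact ⟨w, rfl⟩
    · intro h
      exact ⟨h, by with_unfolding_all rfl⟩
    · intro e hsub
      have : (edgePath (mergeMor G S hcoc) e).length = 1 := rfl
      unfold IsSubdivisionEdge at hsub
      omega
    · intro h e₁ e₂ he₁ he₂
      have h1 : e₁ = h := by
        have : pathEdges (edgePath (mergeMor G S hcoc) e₁) = [e₁] := by with_unfolding_all rfl
        unfold MapsToEdge at he₁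
        rw [this] at he₁
        exact (List.cons.injEq _ _ _ _).mp he₁ |>.1
      have h2 : e₂ = h := by
        have : pathEdges (edgePath (mergeMor G S hcoc) e₂) = [e₂] := by with_unfolding_all rfl
        unfold MapsToEdge at he₂
        rw [this] at he₂
        exact (List.cons.injEq _ _ _ _).mp he₂ |>.1
      rw [h1, h2]
    · intro e hcon
      have : (edgePath (mergeMor G S hcoc) e).length = 1 := rfl
      unfold IsContractionEdge at hcon
      omega
    · ext w
      show w ∈ S ↔ Quotient.mk (mergeSetoid G S) w = Quotient.mk (mergeSetoid G S) s₀
      constructor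
      · intro hw
        exact Quotient.sound (Or.inr ⟨hw, hs₀⟩)
      · intro hw
        rcases Quotient.exact hw with rfl | ⟨hw1, _⟩
        · exact hs₀
        · exact hw1

theorem merging_fiber_iff_coclique (G : CausalNet) (S : Set G.V) (hS : S.Nonempty) :
    (∃ (H : CausalNet) (φ : G ⟶ H) (v : H.V),
        IsMerging φ ∧ S = {w : G.V | vmap φ w = v}) ↔ IsCoclique G S :=
  merging_fiber_iff_coclique' G S hS

end CausalNets
end
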